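/- arXiv:1512.07574 — 2 statements merged into one kernel-verified Lean document; each statement's English description precedes it below -/
import Mathlib

section
/- The average distance between distinct vertices of the incidence graph G_q equals (5q^2 + 3q + 1)/(2q^2 + 2q + 1). -/
open Projectivization

/-- Orthogonality of projective points: scalar product of representatives is zero. -/
def ortho {F : Type} [Field F] (P L : Projectivization F (Fin 3 → F)) : Prop :=
  dotProduct P.rep L.rep = 0

instance {F : Type} [Field F] [Finite F] :
    Finite (Projectivization F (Fin 3 → F)) := Quotient.finite _

noncomputable instance {F : Type} [Field F] [Fintype F] :
    Fintype (Projectivization F (Fin 3 → F)) := Fintype.ofFinite _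

/-- The incidence graph `G_q` of the projective plane over `F`. -/
def projGraph (F : Type) [Field F] :
    SimpleGraph (Bool × Projectivization F (Fin 3 → F)) where
  Adj v w := v.1 ≠ w.1 ∧ ortho v.2 w.2
  symm := ⟨by
    rintro ⟨s, P⟩ ⟨t, L⟩ ⟨h1, h2⟩
    exact ⟨h1.symm, by rwa [ortho, dotProduct_comm]⟩⟩
  loopless := ⟨by rintro ⟨s, P⟩ ⟨h, _⟩; exact h rfl⟩

/-- The modified incidence (polarity) graph `G̅_q` of the projective plane over `F`. -/
def polarityGraph (F : Type) [Field F] :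
    SimpleGraph (Projectivization F (Fin 3 → F)) where
  Adj P L := P ≠ L ∧ ortho P L
  symm := ⟨by
    rintro P L ⟨h1, h2⟩
    exact ⟨h1.symm, by rwa [ortho, dotProduct_comm]⟩⟩
  loopless := ⟨by rintro P ⟨h, _⟩; exact h rfl⟩

section AuxLemmas
open Matrix
variable {F : Type} [Field F] [Fintype F]

local notation "X" => Projectivization F (Fin 3 → F)


lemma card_subtype_mem (W : Submodule F (Fin 3 → F)) :
    (Fintype.card F - 1) * Nat.card {L : X // L.rep ∈ W} =
      Fintype.card F ^ (Module.finrank F W) - 1 := by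
  classical
  have hmk : ∀ (v : Fin 3 → F) (hv : v ≠ 0) (c : Fˣ),
      Projectivization.mk F ((c : F) • v) (smul_ne_zero c.ne_zero hv) =
        Projectivization.mk F v hv := by
    intro v hv c
    rw [mk_eq_mk_iff]
    exact ⟨c, rfl⟩
  have e1 : {L : X // L.rep ∈ W} × Fˣ ≃ {v : Fin 3 → F // v ≠ 0 ∧ v ∈ W} := by
    apply Equiv.ofBijective (f := fun p =>
      (⟨(p.2 : F) • p.1.1.rep,
        ⟨smul_ne_zero p.2.ne_zero p.1.1.rep_nonzero, W.smul_mem _ p.1.2⟩⟩ :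
        {v : Fin 3 → F // v ≠ 0 ∧ v ∈ W}))
    constructor
    · rintro ⟨⟨P, hP⟩, c⟩ ⟨⟨Q, hQ⟩, d⟩ h
      simp only [Subtype.mk_eq_mk] at h
      have hPQ : P = Q := by
        have h1 := hmk P.rep P.rep_nonzero c
        have h2 := hmk Q.rep Q.rep_nonzero d
        rw [mk_rep] at h1 h2
        rw [← h1, ← h2]
        congr 1
      subst hPQ
      have : (c : F) = (d : F) := by
        have := h
        have hrep := P.rep_nonzero
        by_contra hcd
        have : ((c : F) - d) • P.rep = 0 := by
          rw [sub_smul, h, sub_self]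
        rcases smul_eq_zero.mp this with h' | h'
        · exact hcd (sub_eq_zero.mp h')
        · exact hrep h'
      refine Prod.ext (Subtype.ext rfl) (Units.ext this)
    · rintro ⟨v, hv, hvW⟩
      obtain ⟨a, ha⟩ := exists_smul_eq_mk_rep F v hv
      refine ⟨⟨⟨Projectivization.mk F v hv, ?_⟩, a⁻¹⟩, ?_⟩
      · rw [← ha]; exact W.smul_mem _ hvW
      · simp only [Subtype.mk_eq_mk]
        rw [← ha]
        simp [Units.smul_def, smul_smul]
  have hW : Nat.card W = Fintype.card F ^ Module.finrank F W := by
    rw [Nat.card_eq_fintype_card]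
    exact Module.card_eq_pow_finrank
  have e2 : {v : Fin 3 → F // v ≠ 0 ∧ v ∈ W} ≃ {x : W // x ≠ 0} :=
    { toFun := fun p => ⟨⟨p.1, p.2.2⟩, fun h => p.2.1 (congrArg Subtype.val h)⟩
      invFun := fun x => ⟨x.1, fun h => x.2 (Subtype.ext h), x.1.2⟩
      left_inv := fun p => rfl
      right_inv := fun x => rfl }
  have hcard2 : Nat.card {x : W // x ≠ 0} = Fintype.card F ^ Module.finrank F W - 1 := by
    rw [Nat.card_eq_fintype_card]
    rw [Fintype.card_subtype_compl (p := fun x : W => x = 0), Fintype.card_subtype_eq]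
    rw [← Nat.card_eq_fintype_card (α := W), hW]
  calc (Fintype.card F - 1) * Nat.card {L : X // L.rep ∈ W}
      = Nat.card {L : X // L.rep ∈ W} * Nat.card Fˣ := by
        rw [Nat.card_eq_fintype_card (α := Fˣ), Fintype.card_units]; ring
    _ = Nat.card ({L : X // L.rep ∈ W} × Fˣ) := (Nat.card_prod _ _).symm
    _ = Nat.card {v : Fin 3 → F // v ≠ 0 ∧ v ∈ W} := Nat.card_congr e1
    _ = _ := by rw [Nat.card_congr e2, hcard2]

/-- dot product with a fixed vector as a linear map -/
def dotL (p : Fin 3 → F) : (Fin 3 → F) →ₗ[F] F where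
  toFun v := p ⬝ᵥ v
  map_add' v w := by simp [dotProduct_add]
  map_smul' c v := by simp [dotProduct_smul, smul_eq_mul]

lemma two_le_card : 2 ≤ Fintype.card F := Fintype.one_lt_card

lemma nat_card_of_mul {q m r : ℕ} (hq : 2 ≤ q) (h : (q - 1) * m = q ^ r - 1)
    (s : ℕ) (hs : (q:ℤ) ^ r - 1 = ((q:ℤ) - 1) * s) : m = s := by
  have h1 : (1:ℕ) ≤ q := by omega
  have h1r : (1:ℕ) ≤ q ^ r := Nat.one_le_pow _ _ (by omega)
  have hz : ((q:ℤ) - 1) * m = (q:ℤ) ^ r - 1 := by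
    have := congrArg (Nat.cast : ℕ → ℤ) h
    push_cast [h1, h1r] at this
    convert this using 2 <;> omega
  rw [hs] at hz
  have hq1 : ((q:ℤ) - 1) ≠ 0 := by
    have : (2:ℤ) ≤ q := by exact_mod_cast hq
    omega
  have := mul_left_cancel₀ hq1 hz
  exact_mod_cast this

lemma card_proj {q : ℕ} (hF : Fintype.card F = q) (hq : 2 ≤ q) :
    Nat.card (Projectivization F (Fin 3 → F)) = q ^ 2 + q + 1 := by
  have h := card_subtype_mem (F := F) (⊤ : Submodule F (Fin 3 → F))
  have e : {L : X // L.rep ∈ (⊤ : Submodule F (Fin 3 → F))} ≃ X :=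
    Equiv.subtypeUnivEquiv (fun L => Submodule.mem_top)
  rw [Nat.card_congr e] at h
  rw [finrank_top, Module.finrank_fin_fun, hF] at h
  exact nat_card_of_mul hq h _ (by push_cast; ring)

lemma dotL_ne_zero (p : Fin 3 → F) (hp : p ≠ 0) : dotL p ≠ 0 := by
  obtain ⟨i, hi⟩ := Function.ne_iff.mp hp
  intro h
  apply hi
  have := congrFun (congrArg (fun f => f.toFun) h) (Pi.single i 1)
  simp only [dotL, dotProduct_single, mul_one, LinearMap.zero_apply] at this
  simpa using this

lemma finrank_ker_dotL (p : Fin 3 → F) (hp : p ≠ 0) :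
    Module.finrank F (LinearMap.ker (dotL p)) = 2 := by
  have hrank := LinearMap.finrank_range_add_finrank_ker (dotL p)
  have hrange : LinearMap.range (dotL p) = ⊤ := by
    obtain ⟨i, hi⟩ := Function.ne_iff.mp hp
    simp only [ne_eq, Pi.zero_apply] at hi
    rw [eq_top_iff]
    intro x _
    refine ⟨(x * (p i)⁻¹) • (Pi.single i 1 : Fin 3 → F), ?_⟩
    simp only [dotL, LinearMap.coe_mk, AddHom.coe_mk]
    rw [dotProduct_smul, dotProduct_single, smul_eq_mul]
    field_simp
  rw [hrange, finrank_top, Module.finrank_self, Module.finrank_fin_fun] at hrank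
  omega

lemma card_lines {q : ℕ} (hF : Fintype.card F = q) (hq : 2 ≤ q)
    (P : Projectivization F (Fin 3 → F)) :
    Nat.card {L : Projectivization F (Fin 3 → F) // dotProduct P.rep L.rep = 0} =
      q + 1 := by
  have h := card_subtype_mem (F := F) (LinearMap.ker (dotL P.rep))
  have e : {L : X // L.rep ∈ LinearMap.ker (dotL P.rep)} ≃
      {L : X // dotProduct P.rep L.rep = 0} :=
    Equiv.subtypeEquivRight (fun L => by simp [dotL, LinearMap.mem_ker])
  rw [Nat.card_congr e, finrank_ker_dotL P.rep P.rep_nonzero, hF] at h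
  exact nat_card_of_mul hq h _ (by push_cast; ring)


lemma ortho_comm {P L : Projectivization F (Fin 3 → F)} (h : ortho P L) : ortho L P := by
  rwa [ortho, dotProduct_comm]

lemma ortho_mk (P : Projectivization F (Fin 3 → F)) (v : Fin 3 → F) (hv : v ≠ 0)
    (h : dotProduct P.rep v = 0) : ortho P (Projectivization.mk F v hv) := by
  obtain ⟨a, ha⟩ := exists_smul_eq_mk_rep F v hv
  rw [ortho, ← ha, Units.smul_def, dotProduct_smul, h, smul_zero]

/-- Every pair of points has a common perpendicular. -/
lemma exists_common (P Q : Projectivization F (Fin 3 → F)) :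
    ∃ M, ortho P M ∧ ortho Q M := by
  let ψ : (Fin 3 → F) →ₗ[F] (Fin 2 → F) :=
    { toFun := fun v => ![dotProduct P.rep v, dotProduct Q.rep v]
      map_add' := fun v w => by
        funext j; fin_cases j <;> simp [dotProduct_add]
      map_smul' := fun c v => by
        funext j; fin_cases j <;> simp [dotProduct_smul] }
  have hker : LinearMap.ker ψ ≠ ⊥ := by
    intro h
    have hinj : Function.Injective ψ := LinearMap.ker_eq_bot.mp h
    have := LinearMap.finrank_le_finrank_of_injective hinj
    rw [Module.finrank_fin_fun, Module.finrank_fin_fun] at this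
    omega
  obtain ⟨v, hvker, hv⟩ := Submodule.exists_mem_ne_zero_of_ne_bot hker
  refine ⟨Projectivization.mk F v hv, ortho_mk _ _ _ ?_, ortho_mk _ _ _ ?_⟩
  · have := congrFun (LinearMap.mem_ker.mp hvker) 0
    simpa [ψ] using this
  · have := congrFun (LinearMap.mem_ker.mp hvker) 1
    simpa [ψ] using this

lemma walk_parity {u v : Bool × Projectivization F (Fin 3 → F)}
    (w : (projGraph F).Walk u v) : (u.1 = v.1 ↔ Even w.length) := by
  induction w with
  | nil => simp
  | cons h p ih =>
    rename_i a b c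
    have hab : a.1 ≠ b.1 := h.1
    rw [SimpleGraph.Walk.length_cons, Nat.even_add_one, ← ih]
    cases ha : a.1 <;> cases hb : b.1 <;> cases hc : c.1 <;> simp_all

open scoped Classical in
lemma dist_formula (u v : Bool × Projectivization F (Fin 3 → F)) :
    (projGraph F).dist u v =
      if u = v then 0 else if u.1 = v.1 then 2 else if ortho u.2 v.2 then 1 else 3 := by
  by_cases huv : u = v
  · simp [huv, SimpleGraph.dist_self]
  rw [if_neg huv]
  by_cases hside : u.1 = v.1
  · rw [if_pos hside]
    -- distance 2
    obtain ⟨M, hM1, hM2⟩ := exists_common u.2 v.2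
    have hadj1 : (projGraph F).Adj u (!u.1, M) := ⟨by simp, hM1⟩
    have hadj2 : (projGraph F).Adj (!u.1, M) v := ⟨by simp [← hside], ortho_comm hM2⟩
    have w : (projGraph F).Walk u v := (SimpleGraph.Walk.cons hadj1 (hadj2.toWalk))
    have hle : (projGraph F).dist u v ≤ 2 := by
      simpa using SimpleGraph.dist_le (SimpleGraph.Walk.cons hadj1 hadj2.toWalk)
    have hne0 : (projGraph F).dist u v ≠ 0 := by
      rw [SimpleGraph.dist_ne_zero_iff_ne_and_reachable]
      exact ⟨huv, ⟨w⟩⟩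
    have hne1 : (projGraph F).dist u v ≠ 1 := by
      rw [ne_eq, SimpleGraph.dist_eq_one_iff_adj]
      rintro ⟨hs, -⟩
      exact hs hside
    omega
  · rw [if_neg hside]
    by_cases hor : ortho u.2 v.2
    · rw [if_pos hor]
      rw [SimpleGraph.dist_eq_one_iff_adj]
      exact ⟨hside, hor⟩
    · rw [if_neg hor]
      -- distance 3
      obtain ⟨Q, hQ1, hQ2⟩ := exists_common v.2 v.2
      obtain ⟨M, hM1, hM2⟩ := exists_common u.2 Q
      have hadj1 : (projGraph F).Adj u (v.1, M) := ⟨hside, hM1⟩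
      have hadj2 : (projGraph F).Adj (v.1, M) (u.1, Q) :=
        ⟨fun h => hside h.symm, ortho_comm hM2⟩
      have hadj3 : (projGraph F).Adj (u.1, Q) v := ⟨hside, ortho_comm hQ1⟩
      have w : (projGraph F).Walk u v :=
        SimpleGraph.Walk.cons hadj1 (SimpleGraph.Walk.cons hadj2 hadj3.toWalk)
      have hle : (projGraph F).dist u v ≤ 3 := by
        simpa using SimpleGraph.dist_le
          (SimpleGraph.Walk.cons hadj1 (SimpleGraph.Walk.cons hadj2 hadj3.toWalk))
      have hne0 : (projGraph F).dist u v ≠ 0 := by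
        rw [SimpleGraph.dist_ne_zero_iff_ne_and_reachable]
        exact ⟨huv, ⟨w⟩⟩
      have hne1 : (projGraph F).dist u v ≠ 1 := by
        rw [ne_eq, SimpleGraph.dist_eq_one_iff_adj]
        rintro ⟨-, h2⟩
        exact hor h2
      have hne2 : (projGraph F).dist u v ≠ 2 := by
        intro h2
        obtain ⟨p, hp⟩ := (SimpleGraph.Reachable.of_dist_ne_zero hne0).exists_walk_length_eq_dist
        have := (walk_parity p).mpr (by rw [hp, h2]; exact even_two)
        exact hside this
      omega

open scoped Classical in
lemma sum_inner_eq (P : Projectivization F (Fin 3 → F)) :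
    ∑ L : Projectivization F (Fin 3 → F), (if P = L then (0:ℚ) else 2) =
      2 * (Fintype.card (Projectivization F (Fin 3 → F)) : ℚ) - 2 := by
  have : ∀ L : Projectivization F (Fin 3 → F),
      (if P = L then (0:ℚ) else 2) = 2 - (if P = L then 2 else 0) := by
    intro L; split <;> ring
  simp only [this, Finset.sum_sub_distrib, Finset.sum_const, Finset.sum_ite_eq,
    Finset.mem_univ, if_true, Finset.card_univ]
  ring

open scoped Classical in
lemma sum_cross_eq {q : ℕ} (hF : Fintype.card F = q) (hq : 2 ≤ q)
    (P : Projectivization F (Fin 3 → F)) :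
    ∑ L : Projectivization F (Fin 3 → F), (if ortho P L then (1:ℚ) else 3) =
      3 * (Fintype.card (Projectivization F (Fin 3 → F)) : ℚ) - 2 * (q + 1) := by
  have h1 : ∀ L : Projectivization F (Fin 3 → F),
      (if ortho P L then (1:ℚ) else 3) = 3 - 2 * (if ortho P L then 1 else 0) := by
    intro L; split <;> ring
  have hcard : (Finset.univ.filter (fun L => ortho P L)).card = q + 1 := by
    rw [← Fintype.card_subtype, ← Nat.card_eq_fintype_card]
    exact card_lines hF hq P
  simp only [h1, Finset.sum_sub_distrib, Finset.sum_const, Finset.card_univ,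
    ← Finset.mul_sum, Finset.sum_boole, hcard]
  push_cast
  ring

end AuxLemmas

/-- The average distance between distinct vertices of the incidence graph `G_q` equals
`(5q^2 + 3q + 1)/(2q^2 + 2q + 1)`.  (Note `dist v v = 0`, so summing over all ordered pairs
is the same as summing over ordered pairs of distinct vertices.) -/
theorem projGraph_average_distance (q : ℕ) (hq : IsPrimePow q)
    (F : Type) [Field F] [Fintype F] (hF : Fintype.card F = q) :
    (∑ u : Bool × Projectivization F (Fin 3 → F), ∑ v, ((projGraph F).dist u v : ℚ)) /
      ((Fintype.card (Bool × Projectivization F (Fin 3 → F)) : ℚ) *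
        (Fintype.card (Bool × Projectivization F (Fin 3 → F)) - 1)) =
    (5 * q ^ 2 + 3 * q + 1) / (2 * q ^ 2 + 2 * q + 1) := by
  classical
  have hq2 : 2 ≤ q := hF ▸ two_le_card
  set n : ℕ := Fintype.card (Projectivization F (Fin 3 → F)) with hn
  have hncard : n = q ^ 2 + q + 1 := by
    rw [hn, ← Nat.card_eq_fintype_card]; exact card_proj hF hq2
  have hcardprod : (Fintype.card (Bool × Projectivization F (Fin 3 → F)) : ℚ) = 2 * n := by
    rw [Fintype.card_prod, Fintype.card_bool]; push_cast; ring
  have hsum : (∑ u : Bool × Projectivization F (Fin 3 → F), ∑ v, ((projGraph F).dist u v : ℚ)) =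
      (2 * n) * ((2 * (n:ℚ) - 2) + (3 * n - 2 * (q + 1))) := by
    have hform : ∀ u v : Bool × Projectivization F (Fin 3 → F),
        ((projGraph F).dist u v : ℚ) =
          if u = v then 0 else if u.1 = v.1 then 2 else if ortho u.2 v.2 then 1 else 3 := by
      intro u v
      rw [dist_formula]
      split_ifs <;> norm_num
    have key : ∀ u : Bool × Projectivization F (Fin 3 → F),
        (∑ v, ((projGraph F).dist u v : ℚ)) = (2 * (n:ℚ) - 2) + (3 * n - 2 * (q + 1)) := by
      rintro ⟨s, P⟩
      simp only [hform]
      rw [Fintype.sum_prod_type, Fintype.sum_bool]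
      have eA : ∀ t : Bool, s = t →
          (∑ x : Projectivization F (Fin 3 → F),
            (if (s,P) = (t,x) then (0:ℚ) else if s = t then 2 else
              if ortho P x then 1 else 3)) = 2 * (n:ℚ) - 2 := by
        rintro t rfl
        calc (∑ x : Projectivization F (Fin 3 → F),
              (if (s,P) = (s,x) then (0:ℚ) else if s = s then 2 else
                if ortho P x then 1 else 3))
            = ∑ x : Projectivization F (Fin 3 → F), (if P = x then (0:ℚ) else 2) := by
              refine Finset.sum_congr rfl (fun x _ => ?_)
              by_cases hPx : P = x
              · rw [if_pos (by rw [hPx]), if_pos hPx]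
              · rw [if_neg (fun h => hPx (congrArg Prod.snd h)), if_pos rfl, if_neg hPx]
          _ = 2 * (n:ℚ) - 2 := sum_inner_eq P
      have eB : ∀ t : Bool, s ≠ t →
          (∑ x : Projectivization F (Fin 3 → F),
            (if (s,P) = (t,x) then (0:ℚ) else if s = t then 2 else
              if ortho P x then 1 else 3)) = 3 * (n:ℚ) - 2 * (q + 1) := by
        intro t hst
        calc (∑ x : Projectivization F (Fin 3 → F),
              (if (s,P) = (t,x) then (0:ℚ) else if s = t then 2 else
                if ortho P x then 1 else 3))
            = ∑ x : Projectivization F (Fin 3 → F), (if ortho P x then (1:ℚ) else 3) := by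
              refine Finset.sum_congr rfl (fun x _ => ?_)
              rw [if_neg (fun h => hst (congrArg Prod.fst h)), if_neg hst]
          _ = 3 * (n:ℚ) - 2 * (q + 1) := sum_cross_eq hF hq2 P
      cases s
      · rw [eA false rfl, eB true (by simp)]
        ring
      · rw [eA true rfl, eB false (by simp)]
    rw [Finset.sum_congr rfl (fun u _ => key u), Finset.sum_const, Finset.card_univ,
      Fintype.card_prod, Fintype.card_bool]
    push_cast
    ring
  rw [hsum, hcardprod]
  have hnq : (n : ℚ) = (q:ℚ) ^ 2 + q + 1 := by exact_mod_cast congrArg (Nat.cast (R := ℚ)) hncard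
  rw [hnq]
  have hqQ : (0:ℚ) ≤ q := Nat.cast_nonneg q
  have hd1 : (2 * ((q:ℚ)^2+q+1)) * (2 * ((q:ℚ)^2+q+1) - 1) ≠ 0 := by nlinarith
  have hd2 : (2 * (q:ℚ)^2 + 2*q + 1) ≠ 0 := by positivity
  rw [div_eq_div_iff hd1 hd2]
  ring
end

section
/- In the MMS (Slim Fly) graph MMS(q) with q ≡ 1 (mod 4), every vertex has degree (3q−1)/2: exactly (q−1)/2 local edges and q global edges. -/
/-- `X_0` is the set of nonzero squares of `F` and `X_1` the set of nonsquares. -/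
def mmsX (F : Type) [Field F] : Bool → Set F
  | false => {a : F | a ≠ 0 ∧ IsSquare a}
  | true => {a : F | a ≠ 0 ∧ ¬IsSquare a}

/-- The McKay–Miller–Širáň (Slim Fly) graph `MMS(q)` on vertex set `{0,1} × F_q × F_q`:
local edges join `(s,x,y₁)` and `(s,x,y₂)` when `y₁ - y₂ ∈ X_s`; global edges join
`(0,x₁,y₁)` and `(1,x₂,y₂)` when `y₁ - y₂ = x₁x₂`. -/
def mmsGraph (F : Type) [Field F] : SimpleGraph (Bool × F × F) :=
  SimpleGraph.fromRel (fun v w =>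
    (v.1 = w.1 ∧ v.2.1 = w.2.1 ∧ v.2.2 - w.2.2 ∈ mmsX F v.1) ∨
    (v.1 = false ∧ w.1 = true ∧ v.2.2 - w.2.2 = v.2.1 * w.2.1))

lemma neg_mem_mmsX {F : Type} [Field F] (hneg : IsSquare (-1 : F)) {s : Bool} {a : F}
    (ha : a ∈ mmsX F s) : -a ∈ mmsX F s := by
  cases s with
  | false =>
    obtain ⟨h0, hsq⟩ := ha
    exact ⟨neg_ne_zero.mpr h0, by rw [show -a = -1 * a by ring]; exact hneg.mul hsq⟩
  | true =>
    obtain ⟨h0, hsq⟩ := ha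
    refine ⟨neg_ne_zero.mpr h0, fun h => hsq ?_⟩
    rw [show a = -1 * -a by ring]
    exact hneg.mul h

lemma mmsX_ne_zero {F : Type} [Field F] {s : Bool} {a : F} (ha : a ∈ mmsX F s) : a ≠ 0 := by
  cases s <;> exact ha.1

lemma card_mmsX {F : Type} [Field F] [Fintype F] (hodd : Fintype.card F % 2 = 1) (s : Bool) :
    Nat.card (mmsX F s) = (Fintype.card F - 1) / 2 := by
  classical
  have hchar : ringChar F ≠ 2 := fun h => by
    have := FiniteField.even_card_of_char_two h; omega
  obtain ⟨u, hu⟩ := FiniteField.exists_nonsquare (F := F) hchar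
  have hu0 : u ≠ 0 := fun h => hu (h ▸ ⟨0, by simp⟩)
  have himg : mmsX F true = (fun a => u * a) '' (mmsX F false) := by
    ext b
    constructor
    · rintro ⟨hb0, hbsq⟩
      refine ⟨u⁻¹ * b, ⟨by simp [hu0, hb0], ?_⟩, by field_simp⟩
      have h1 : quadraticChar F u = -1 := quadraticChar_neg_one_iff_not_isSquare.mpr hu
      have h2 : quadraticChar F b = -1 := quadraticChar_neg_one_iff_not_isSquare.mpr hbsq
      have h3 : quadraticChar F (u⁻¹ * b) = 1 := by
        rw [map_mul, h2]
        have hinv : ¬IsSquare u⁻¹ := fun h => hu (by simpa using h.inv)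
        rw [quadraticChar_neg_one_iff_not_isSquare.mpr hinv]; ring
      exact (quadraticChar_one_iff_isSquare (by simp [hu0, hb0])).mp h3
    · rintro ⟨a, ⟨ha0, hasq⟩, rfl⟩
      refine ⟨mul_ne_zero hu0 ha0, fun h => hu ?_⟩
      have : u = (u * a) * a⁻¹ := by field_simp
      rw [this]
      exact h.mul (hasq.inv)
  have hcard_eq : (mmsX F true).ncard = (mmsX F false).ncard := by
    rw [himg, Set.ncard_image_of_injective _ (mul_right_injective₀ hu0)]
  have hunion : mmsX F false ∪ mmsX F true = {(0 : F)}ᶜ := by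
    ext a
    simp only [mmsX, Set.mem_union, Set.mem_setOf_eq, Set.mem_compl_iff, Set.mem_singleton_iff]
    tauto
  have hdisj : Disjoint (mmsX F false) (mmsX F true) := by
    rw [Set.disjoint_left]
    rintro a ⟨_, h⟩ ⟨_, h'⟩; exact h' h
  have hsum : (mmsX F false).ncard + (mmsX F true).ncard = Fintype.card F - 1 := by
    rw [← Set.ncard_union_eq hdisj (Set.toFinite _) (Set.toFinite _), hunion]
    have h0 : ({(0 : F)}ᶜ : Set F) = Set.univ \ {0} := by simp [Set.compl_eq_univ_diff]
    rw [h0, Set.ncard_diff_singleton_of_mem (Set.mem_univ (0 : F)), Set.ncard_univ,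
      Nat.card_eq_fintype_card]
  rw [Nat.card_coe_set_eq]
  have hq1 : 1 ≤ Fintype.card F := Fintype.card_pos
  cases s
  · omega
  · omega

/-- In `MMS(q)` with `q ≡ 1 (mod 4)`, every vertex has degree `(3q-1)/2`: exactly
`(q-1)/2` local edges and `q` global edges. -/
theorem mmsGraph_degrees (q : ℕ) (hq : IsPrimePow q) (hq4 : q % 4 = 1)
    (F : Type) [Field F] [Fintype F] (hF : Fintype.card F = q) :
    ∀ v : Bool × F × F,
      Nat.card {w | (mmsGraph F).Adj v w ∧ w.1 = v.1} = (q - 1) / 2 ∧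
      Nat.card {w | (mmsGraph F).Adj v w ∧ w.1 ≠ v.1} = q ∧
      Nat.card ((mmsGraph F).neighborSet v) = (3 * q - 1) / 2 := by
  have hodd : Fintype.card F % 2 = 1 := by omega
  have hneg : IsSquare (-1 : F) :=
    FiniteField.isSquare_neg_one_iff.mpr (by omega)
  rintro ⟨s, x, y⟩
  -- local neighbors
  have hlocal : {w : Bool × F × F | (mmsGraph F).Adj (s, x, y) w ∧ w.1 = (s, x, y).1}
      = (fun a => (s, x, y - a)) '' (mmsX F s) := by
    ext ⟨t, z, u⟩
    simp only [Set.mem_setOf_eq, mmsGraph, SimpleGraph.fromRel_adj, Set.mem_image]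
    constructor
    · rintro ⟨⟨hne, (⟨-, hx, hmem⟩ | ⟨hs, ht, -⟩) | (⟨ht, hz, hmem⟩ | ⟨ht, hs, -⟩)⟩, hw1⟩
      · refine ⟨y - u, hmem, ?_⟩
        rw [Prod.mk.injEq, Prod.mk.injEq]
        exact ⟨hw1.symm, hx, sub_sub_cancel y u⟩
      · subst hw1; rw [hs] at ht; exact absurd ht (by simp)
      · refine ⟨y - u, ?_, ?_⟩
        · have : u - y ∈ mmsX F s := hw1 ▸ hmem
          simpa [neg_sub] using neg_mem_mmsX hneg this
        · rw [Prod.mk.injEq, Prod.mk.injEq]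
          exact ⟨hw1.symm, hz.symm, sub_sub_cancel y u⟩
      · subst hw1; rw [ht] at hs; exact absurd hs (by simp)
    · rintro ⟨a, ha, heq⟩
      obtain ⟨rfl, rfl, rfl⟩ : t = s ∧ z = x ∧ u = y - a := by
        simpa [Prod.ext_iff, eq_comm] using heq
      refine ⟨⟨?_, Or.inl (Or.inl ⟨rfl, rfl, by simpa [sub_sub_cancel] using ha⟩)⟩, rfl⟩
      simp only [ne_eq, Prod.mk.injEq]
      rintro ⟨-, -, h⟩
      exact mmsX_ne_zero ha (by linear_combination h)
  have hglobal : ∃ f : F → Bool × F × F, Function.Injective f ∧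
      {w : Bool × F × F | (mmsGraph F).Adj (s, x, y) w ∧ w.1 ≠ (s, x, y).1}
        = f '' Set.univ := by
    cases s
    · refine ⟨fun t => (true, t, y - x * t), fun a b h => congrArg (fun p => p.2.1) h, ?_⟩
      ext ⟨t, z, u⟩
      simp only [Set.mem_setOf_eq, mmsGraph, SimpleGraph.fromRel_adj, Set.mem_image,
        Set.mem_univ, true_and]
      constructor
      · rintro ⟨⟨hne, (⟨h1, -, -⟩ | ⟨ht, heq⟩) | (⟨h1, -, -⟩ | ⟨-, h2, -⟩)⟩, hw1⟩
        · exact absurd h1.symm hw1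
        · refine ⟨z, ?_⟩
          rw [Prod.mk.injEq, Prod.mk.injEq]
          exact ⟨ht.symm, rfl, by linear_combination heq⟩
        · exact absurd h1 hw1
        · exact absurd h2 (by simp)
      · rintro ⟨a, heq⟩
        obtain ⟨rfl, rfl, rfl⟩ : t = true ∧ z = a ∧ u = y - x * a := by
          simpa [Prod.ext_iff, eq_comm] using heq
        exact ⟨⟨by simp, Or.inl (Or.inr ⟨rfl, by ring⟩)⟩, by simp⟩
    · refine ⟨fun t => (false, t, y + t * x), fun a b h => congrArg (fun p => p.2.1) h, ?_⟩
      ext ⟨t, z, u⟩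
      simp only [Set.mem_setOf_eq, mmsGraph, SimpleGraph.fromRel_adj, Set.mem_image,
        Set.mem_univ, true_and]
      constructor
      · rintro ⟨⟨hne, (⟨h1, -, -⟩ | ⟨h2, -, -⟩) | (⟨h1, -, -⟩ | ⟨ht, heq⟩)⟩, hw1⟩
        · exact absurd h1.symm hw1
        · exact absurd h2 (by simp)
        · exact absurd h1 hw1
        · refine ⟨z, ?_⟩
          rw [Prod.mk.injEq, Prod.mk.injEq]
          exact ⟨ht.symm, rfl, by linear_combination -heq⟩
      · rintro ⟨a, heq⟩
        obtain ⟨rfl, rfl, rfl⟩ : t = false ∧ z = a ∧ u = y + a * x := by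
          simpa [Prod.ext_iff, eq_comm] using heq
        exact ⟨⟨by simp, Or.inr (Or.inr ⟨rfl, by ring⟩)⟩, by simp⟩
  have hloc_card : Nat.card {w : Bool × F × F |
      (mmsGraph F).Adj (s, x, y) w ∧ w.1 = (s, x, y).1} = (q - 1) / 2 := by
    rw [Nat.card_coe_set_eq, hlocal,
      Set.ncard_image_of_injective _ (fun a b h => by
        simpa [Prod.ext_iff, sub_right_injective.eq_iff] using h),
      ← Nat.card_coe_set_eq, card_mmsX hodd, hF]
  have hglob_card : Nat.card {w : Bool × F × F |
      (mmsGraph F).Adj (s, x, y) w ∧ w.1 ≠ (s, x, y).1} = q := by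
    obtain ⟨f, hf, hgl⟩ := hglobal
    rw [Nat.card_coe_set_eq, hgl, Set.ncard_image_of_injective _ hf,
      Set.ncard_univ, Nat.card_eq_fintype_card, hF]
  refine ⟨hloc_card, hglob_card, ?_⟩
  have hsplit : (mmsGraph F).neighborSet (s, x, y) =
      {w : Bool × F × F | (mmsGraph F).Adj (s, x, y) w ∧ w.1 = (s, x, y).1} ∪
      {w : Bool × F × F | (mmsGraph F).Adj (s, x, y) w ∧ w.1 ≠ (s, x, y).1} := by
    ext w
    simp only [SimpleGraph.mem_neighborSet, Set.mem_union, Set.mem_setOf_eq]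
    tauto
  have hdisj : Disjoint
      {w : Bool × F × F | (mmsGraph F).Adj (s, x, y) w ∧ w.1 = (s, x, y).1}
      {w : Bool × F × F | (mmsGraph F).Adj (s, x, y) w ∧ w.1 ≠ (s, x, y).1} := by
    rw [Set.disjoint_left]
    rintro w ⟨-, h⟩ ⟨-, h'⟩
    exact h' h
  rw [Nat.card_coe_set_eq, hsplit,
    Set.ncard_union_eq hdisj (Set.toFinite _) (Set.toFinite _),
    ← Nat.card_coe_set_eq, ← Nat.card_coe_set_eq, hloc_card, hglob_card]
  omega
end
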